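/- In a one-dimensional ISAC network with K nodes and nonempty sensing link set U(A), for any fixed throughput f with 0 ≤ f ≤ f*, the maximum sensing fidelity compatible with throughput f is max{s : (s, f) ∈ R} = Σ_{u ∈ U(A)} c_u − |U(A)| · f. -/

import Mathlib

/-- An ISAC network on a finite node type `V`: a symmetric, irreflexive set of
directed links `E`, a source `Tx`, a sink `Rx`, a nonnegative capacity `c` on
undirected links (unordered pairs), and a sensing region `A`. -/
structure ISACNetwork (V : Type) [Fintype V] [DecidableEq V] where
  E : Finset (V × V)
  symm : ∀ i j : V, (i, j) ∈ E → (j, i) ∈ E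
  irrefl : ∀ i : V, (i, i) ∉ E
  Tx : V
  Rx : V
  TxNeRx : Tx ≠ Rx
  c : Sym2 V → ℝ
  c_nonneg : ∀ u : Sym2 V, 0 ≤ c u
  A : Finset V

namespace ISACNetwork

variable {V : Type} [Fintype V] [DecidableEq V]

/-- `E(A)`: directed links with both endpoints in the sensing region. -/
def EA (N : ISACNetwork V) : Finset (V × V) :=
  N.E.filter fun e => e.1 ∈ N.A ∧ e.2 ∈ N.A

/-- `U(A)`: undirected links with both endpoints in the sensing region. -/
def UA (N : ISACNetwork V) : Finset (Sym2 V) :=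
  N.EA.image (fun e => s(e.1, e.2))

/-- A valid assignment of communication rates `f` and sensing rates `s`:
nonnegative rates for which there is a nonnegative capacity split `ca` of the
undirected link capacities with `f e + s e ≤ ca e` on each directed link, no
communication into the source or out of the sink, and flow conservation at
every intermediate node. -/
def Valid (N : ISACNetwork V) (f s : V × V → ℝ) : Prop :=
  (∀ e ∈ N.E, 0 ≤ f e) ∧ (∀ e ∈ N.E, 0 ≤ s e) ∧
  ∃ ca : V × V → ℝ,
    (∀ e ∈ N.E, 0 ≤ ca e) ∧
    (∀ i j : V, (i, j) ∈ N.E → ca (i, j) + ca (j, i) = N.c s(i, j)) ∧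
    (∀ e ∈ N.E, f e + s e ≤ ca e) ∧
    (∀ i : V, (i, N.Tx) ∈ N.E → f (i, N.Tx) = 0) ∧
    (∀ j : V, (N.Rx, j) ∈ N.E → f (N.Rx, j) = 0) ∧
    (∀ j : V, j ≠ N.Tx → j ≠ N.Rx →
      ∑ i ∈ Finset.univ.filter (fun i => (i, j) ∈ N.E), f (i, j)
        = ∑ k ∈ Finset.univ.filter (fun k => (j, k) ∈ N.E), f (j, k))

/-- The sensing fidelity achieved by a sensing-rate assignment. -/
def sensOf (N : ISACNetwork V) (s : V × V → ℝ) : ℝ := ∑ e ∈ N.EA, s e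

/-- The throughput achieved by a communication-rate assignment. -/
def flowOf (N : ISACNetwork V) (f : V × V → ℝ) : ℝ :=
  ∑ j ∈ Finset.univ.filter (fun j => (N.Tx, j) ∈ N.E), f (N.Tx, j)

/-- The sensing–throughput region: all pairs `(s, f)` achieved by a valid
assignment. -/
def Region (N : ISACNetwork V) : Set (ℝ × ℝ) :=
  { p | ∃ fr sr : V × V → ℝ, N.Valid fr sr ∧ N.sensOf sr = p.1 ∧ N.flowOf fr = p.2 }

end ISACNetwork

/-- The one-dimensional ISAC network with `K ≥ 2` nodes: nodes `0, …, K-1`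
(standing for `1, …, K`), links between consecutive nodes in both directions,
source node `0` and sink node `K-1`. -/
def pathNetwork (K : ℕ) (hK : 2 ≤ K) (cap : Sym2 (Fin K) → ℝ)
    (hcap : ∀ u, 0 ≤ cap u) (A : Finset (Fin K)) : ISACNetwork (Fin K) where
  E := Finset.univ.filter fun e : Fin K × Fin K =>
    e.1.val + 1 = e.2.val ∨ e.2.val + 1 = e.1.val
  symm := by
    intro i j h
    simp only [Finset.mem_filter, Finset.mem_univ, true_and] at h ⊢
    tauto
  irrefl := by
    intro i h
    simp only [Finset.mem_filter, Finset.mem_univ, true_and] at h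
    omega
  Tx := ⟨0, by omega⟩
  Rx := ⟨K - 1, by omega⟩
  TxNeRx := by
    rw [Fin.ne_iff_vne]
    simp only [ne_eq]
    omega
  c := cap
  c_nonneg := hcap
  A := A

/-- `c_min`: the smallest undirected link capacity of the one-dimensional
ISAC network, `min_{1 ≤ j ≤ K-1} c_{{j,j+1}}`. -/
noncomputable def cmin (K : ℕ) (hK : 2 ≤ K) (cap : Sym2 (Fin K) → ℝ) : ℝ :=
  (Finset.univ : Finset (Fin (K - 1))).inf'
    (Finset.univ_nonempty_iff.mpr ⟨⟨0, by omega⟩⟩)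
    (fun j => cap s(⟨j.val, by have := j.isLt; omega⟩,
      ⟨j.val + 1, by have := j.isLt; omega⟩))


section helpers

variable {K : ℕ} (hK : 2 ≤ K) (cap : Sym2 (Fin K) → ℝ)
  (hcap : ∀ u, 0 ≤ cap u) (A : Finset (Fin K))

lemma mem_E (i j : Fin K) :
    (i, j) ∈ (pathNetwork K hK cap hcap A).E ↔ i.val + 1 = j.val ∨ j.val + 1 = i.val := by
  simp [pathNetwork]

example : (pathNetwork K hK cap hcap A).Tx = ⟨0, by omega⟩ := rfl

lemma in_filter_eq (m : Fin K) (h0 : 0 < m.val) (h1 : m.val + 1 < K) :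
    Finset.univ.filter (fun i => (i, m) ∈ (pathNetwork K hK cap hcap A).E)
      = {⟨m.val - 1, by omega⟩, ⟨m.val + 1, h1⟩} := by
  ext i
  simp [mem_E, Fin.ext_iff]
  omega

lemma out_filter_eq (m : Fin K) (h0 : 0 < m.val) (h1 : m.val + 1 < K) :
    Finset.univ.filter (fun k => (m, k) ∈ (pathNetwork K hK cap hcap A).E)
      = {⟨m.val - 1, by omega⟩, ⟨m.val + 1, h1⟩} := by
  ext i
  simp [mem_E, Fin.ext_iff]
  omega

lemma tx_filter_eq :
    Finset.univ.filter (fun j => ((pathNetwork K hK cap hcap A).Tx, j) ∈ (pathNetwork K hK cap hcap A).E)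
      = {(⟨1, by omega⟩ : Fin K)} := by
  ext i
  simp [mem_E, Fin.ext_iff, pathNetwork]
  omega


lemma cut_lemma (fr sr : Fin K × Fin K → ℝ)
    (hv : (pathNetwork K hK cap hcap A).Valid fr sr) :
    ∀ j : ℕ, (hj : j + 1 < K) →
      (pathNetwork K hK cap hcap A).flowOf fr
        = fr (⟨j, by omega⟩, ⟨j + 1, hj⟩) - fr (⟨j + 1, hj⟩, ⟨j, by omega⟩) := by
  obtain ⟨hf0, hs0, ca, hca0, hsum, hcale, hTx, hRx, hcons⟩ := hv
  intro j
  induction j with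
  | zero =>
    intro hj
    have h1 : fr (⟨1, hj⟩, ⟨0, by omega⟩) = 0 := by
      have := hTx ⟨1, hj⟩ (by rw [mem_E]; right; simp [pathNetwork])
      simpa [pathNetwork] using this
    rw [ISACNetwork.flowOf, tx_filter_eq hK cap hcap A]
    rw [Finset.sum_singleton, h1]
    simp [pathNetwork]
  | succ j ih =>
    intro hj
    have hj' : j + 1 < K := by omega
    have hIH := ih hj'
    set m : Fin K := ⟨j + 1, hj'⟩ with hm
    have hmv : m.val = j + 1 := rfl
    have hmTx : m ≠ (pathNetwork K hK cap hcap A).Tx := by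
      have hr : (pathNetwork K hK cap hcap A).Tx = ⟨0, by omega⟩ := rfl
      rw [hr, Fin.ne_iff_vne]; simp only [Fin.val_mk]; omega
    have hmRx : m ≠ (pathNetwork K hK cap hcap A).Rx := by
      have hr : (pathNetwork K hK cap hcap A).Rx = ⟨K - 1, by omega⟩ := rfl
      rw [hr, Fin.ne_iff_vne]; simp only [Fin.val_mk]; omega
    have hc := hcons m hmTx hmRx
    rw [in_filter_eq hK cap hcap A m (by omega) (by omega),
        out_filter_eq hK cap hcap A m (by omega) (by omega)] at hc
    have hne : (⟨m.val - 1, by omega⟩ : Fin K) ≠ ⟨m.val + 1, by omega⟩ := by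
      rw [Fin.ne_iff_vne]; simp only [Fin.val_mk]; omega
    rw [Finset.sum_pair hne, Finset.sum_pair hne] at hc
    have e1 : (⟨m.val - 1, by omega⟩ : Fin K) = ⟨j, by omega⟩ := by
      apply Fin.ext; simp only [Fin.val_mk]; try omega
    have e2 : (⟨m.val + 1, by omega⟩ : Fin K) = ⟨j + 1 + 1, hj⟩ := by
      apply Fin.ext; simp only [Fin.val_mk]; try omega
    rw [e1, e2] at hc
    rw [hIH]
    linarith

lemma mem_EA (e : Fin K × Fin K) :
    e ∈ (pathNetwork K hK cap hcap A).EA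
      ↔ (e.1.val + 1 = e.2.val ∨ e.2.val + 1 = e.1.val) ∧ e.1 ∈ A ∧ e.2 ∈ A := by
  rw [ISACNetwork.EA, Finset.mem_filter]
  exact and_congr_left fun _ => mem_E hK cap hcap A e.1 e.2

lemma EA_swap {e : Fin K × Fin K} (he : e ∈ (pathNetwork K hK cap hcap A).EA) :
    e.swap ∈ (pathNetwork K hK cap hcap A).EA := by
  rw [mem_EA] at he ⊢
  simp only [Prod.fst_swap, Prod.snd_swap]
  tauto

lemma UA_eq_image :
    (pathNetwork K hK cap hcap A).UA
      = ((pathNetwork K hK cap hcap A).EA.filter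
          (fun e => e.1.val + 1 = e.2.val)).image (fun e => s(e.1, e.2)) := by
  apply Finset.Subset.antisymm
  · intro u hu
    rw [ISACNetwork.UA, Finset.mem_image] at hu
    obtain ⟨e, he, rfl⟩ := hu
    rcases ((mem_EA hK cap hcap A e).mp he).1 with h | h
    · exact Finset.mem_image.mpr ⟨e, Finset.mem_filter.mpr ⟨he, h⟩, rfl⟩
    · refine Finset.mem_image.mpr ⟨e.swap, Finset.mem_filter.mpr
        ⟨EA_swap hK cap hcap A he, h⟩, ?_⟩
      rw [Prod.swap]
      exact Sym2.mk_prod_swap_eq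
  · intro u hu
    rw [Finset.mem_image] at hu
    obtain ⟨e, he, rfl⟩ := hu
    exact Finset.mem_image.mpr ⟨e, (Finset.mem_filter.mp he).1, rfl⟩

lemma sum_UA (h : Sym2 (Fin K) → ℝ) :
    ∑ u ∈ (pathNetwork K hK cap hcap A).UA, h u
      = ∑ e ∈ (pathNetwork K hK cap hcap A).EA.filter
          (fun e => e.1.val + 1 = e.2.val), h s(e.1, e.2) := by
  rw [UA_eq_image]
  refine Finset.sum_image ?_
  intro e1 h1 e2 h2 heq
  rw [Finset.mem_coe, Finset.mem_filter] at h1 h2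
  rw [Sym2.eq_iff] at heq
  rcases heq with ⟨ha, hb⟩ | ⟨ha, hb⟩
  · exact Prod.ext ha hb
  · exfalso
    have := h1.2
    have := h2.2
    have : e1.1.val = e2.2.val := by rw [ha]
    have : e1.2.val = e2.1.val := by rw [hb]
    omega

lemma sum_EA_split (g : Fin K × Fin K → ℝ) :
    ∑ e ∈ (pathNetwork K hK cap hcap A).EA, g e
      = ∑ e ∈ (pathNetwork K hK cap hcap A).EA.filter
          (fun e => e.1.val + 1 = e.2.val), (g e + g e.swap) := by
  rw [Finset.sum_add_distrib]
  rw [← Finset.sum_filter_add_sum_filter_not (pathNetwork K hK cap hcap A).EA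
    (fun e => e.1.val + 1 = e.2.val) g]
  congr 1
  refine Finset.sum_nbij' (fun e => e.swap) (fun e => e.swap) ?_ ?_ ?_ ?_ ?_
  · intro e he
    rw [Finset.mem_filter] at he ⊢
    refine ⟨EA_swap hK cap hcap A he.1, ?_⟩
    have := ((mem_EA hK cap hcap A e).mp he.1).1
    have h2 := he.2
    simp only [Prod.fst_swap, Prod.snd_swap] at *
    omega
  · intro e he
    rw [Finset.mem_filter] at he ⊢
    refine ⟨EA_swap hK cap hcap A he.1, ?_⟩
    have h2 := he.2
    simp only [Prod.fst_swap, Prod.snd_swap] at *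
    omega
  · intro e _; exact Prod.swap_swap e
  · intro e _; exact Prod.swap_swap e
  · intro e _; rfl

lemma edge_eta (e : Fin K × Fin K) (hf : e.1.val + 1 = e.2.val) (h : e.1.val + 1 < K) :
    ((⟨e.1.val, by omega⟩ : Fin K), (⟨e.1.val + 1, h⟩ : Fin K)) = e := by
  refine Prod.ext (Fin.ext ?_) (Fin.ext ?_) <;> simp <;> omega

lemma flow_le_cap (fr sr : Fin K × Fin K → ℝ)
    (hv : (pathNetwork K hK cap hcap A).Valid fr sr) (j : ℕ) (hj : j + 1 < K) :
    (pathNetwork K hK cap hcap A).flowOf fr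
      ≤ cap s((⟨j, by omega⟩ : Fin K), (⟨j + 1, hj⟩ : Fin K)) := by
  have hcut := cut_lemma hK cap hcap A fr sr hv j hj
  obtain ⟨hf0, hs0, ca, hca0, hsum, hcale, hTx, hRx, hcons⟩ := hv
  have he : ((⟨j, by omega⟩ : Fin K), (⟨j + 1, hj⟩ : Fin K)) ∈ (pathNetwork K hK cap hcap A).E := by
    rw [mem_E]; left; simp
  have he' : ((⟨j + 1, hj⟩ : Fin K), (⟨j, by omega⟩ : Fin K)) ∈ (pathNetwork K hK cap hcap A).E := by
    rw [mem_E]; right; simp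
  have h1 := hcale _ he
  have h2 := hf0 _ he'
  have h3 := hs0 _ he
  have h4 := hca0 _ he'
  have h5 := hsum _ _ he
  have h6 : (pathNetwork K hK cap hcap A).c
      s((⟨j, by omega⟩ : Fin K), (⟨j + 1, hj⟩ : Fin K))
      = cap s((⟨j, by omega⟩ : Fin K), (⟨j + 1, hj⟩ : Fin K)) := rfl
  rw [h6] at h5
  linarith

lemma edge_eta2 (e : Fin K × Fin K) (hf : e.1.val + 1 = e.2.val) (h : e.1.val + 1 < K) :
    ((⟨e.1.val + 1, h⟩ : Fin K), (⟨e.1.val, by omega⟩ : Fin K)) = (e.2, e.1) := by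
  refine Prod.ext (Fin.ext ?_) (Fin.ext ?_) <;> simp <;> omega
end helpers

/-- In a one-dimensional ISAC network with nonempty sensing link set `U(A)`,
for any fixed throughput `0 ≤ f ≤ f*`, the maximum sensing fidelity compatible
with throughput `f` is `Σ_{u ∈ U(A)} c_u − |U(A)| · f`. -/
theorem oneD_optimal_tradeoff {K : ℕ} (hK : 2 ≤ K) (cap : Sym2 (Fin K) → ℝ)
    (hcap : ∀ u, 0 ≤ cap u) (A : Finset (Fin K))
    (hUA : (pathNetwork K hK cap hcap A).UA.Nonempty)
    (fstar : ℝ)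
    (hfstar : IsGreatest
      {f : ℝ | ∃ s : ℝ, (s, f) ∈ (pathNetwork K hK cap hcap A).Region} fstar)
    (f : ℝ) (hf0 : 0 ≤ f) (hff : f ≤ fstar) :
    IsGreatest {s : ℝ | (s, f) ∈ (pathNetwork K hK cap hcap A).Region}
      (∑ u ∈ (pathNetwork K hK cap hcap A).UA, cap u
        - ((pathNetwork K hK cap hcap A).UA.card : ℝ) * f) := by
  have hTxv : ((pathNetwork K hK cap hcap A).Tx).val = 0 := rfl
  have hRxv : ((pathNetwork K hK cap hcap A).Rx).val = K - 1 := rfl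
  have hfcap : ∀ j : ℕ, (hj : j + 1 < K) →
      f ≤ cap s((⟨j, by omega⟩ : Fin K), (⟨j + 1, hj⟩ : Fin K)) := by
    intro j hj
    obtain ⟨s0, fr0, sr0, hv0, _, hflow0⟩ := hfstar.1
    calc f ≤ fstar := hff
      _ = (pathNetwork K hK cap hcap A).flowOf fr0 := hflow0.symm
      _ ≤ _ := flow_le_cap hK cap hcap A fr0 sr0 hv0 j hj
  have hsum_sub : ∑ u ∈ (pathNetwork K hK cap hcap A).UA, (cap u - f)
      = ∑ u ∈ (pathNetwork K hK cap hcap A).UA, cap u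
        - ((pathNetwork K hK cap hcap A).UA.card : ℝ) * f := by
    rw [Finset.sum_sub_distrib, Finset.sum_const, nsmul_eq_mul]
  constructor
  · -- membership
    refine ⟨fun e => if e.1.val + 1 = e.2.val then f else 0,
            fun e => if e.1.val + 1 = e.2.val then cap s(e.1, e.2) - f else 0,
            ⟨?_, ?_, ?_⟩, ?_, ?_⟩
    · intro e _; dsimp only; split <;> simp [hf0]
    · intro e he; dsimp only; split
      · rename_i hfwd
        have h2 := e.2.isLt
        have hj : e.1.val + 1 < K := by omega
        have := hfcap e.1.val hj
        have hx := congrArg (fun p : Fin K × Fin K => s(p.1, p.2)) (edge_eta e hfwd hj)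
        dsimp only at hx
        rw [hx] at this
        linarith
      · exact le_refl 0
    · refine ⟨fun e => if e.1.val + 1 = e.2.val then cap s(e.1, e.2) else 0,
        ?_, ?_, ?_, ?_, ?_, ?_⟩
      · intro e _; dsimp only; split
        · exact hcap _
        · exact le_refl 0
      · intro i j hij
        rw [mem_E] at hij
        have hc : (pathNetwork K hK cap hcap A).c s(i, j) = cap s(i, j) := rfl
        rw [hc]; dsimp only
        rcases hij with h | h
        · rw [if_pos h, if_neg (by omega)]; ring
        · rw [if_neg (by omega), if_pos h]
          rw [show s(j, i) = s(i, j) from Sym2.eq_swap]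
          ring
      · intro e _; dsimp only; split <;> simp
      · intro i hi
        dsimp only
        split_ifs with h
        · exfalso; omega
        · rfl
      · intro j hj
        have hjv := j.isLt
        dsimp only
        split_ifs with h
        · exfalso; omega
        · rfl
      · intro j hjTx hjRx
        have hjv := j.isLt
        have h0 : 0 < j.val := by
          by_contra h
          exact hjTx (Fin.ext (by omega))
        have h1 : j.val + 1 < K := by
          by_contra h
          exact hjRx (Fin.ext (by omega))
        rw [in_filter_eq hK cap hcap A j h0 h1, out_filter_eq hK cap hcap A j h0 h1]
        have hne : (⟨j.val - 1, by omega⟩ : Fin K) ≠ ⟨j.val + 1, h1⟩ := by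
          rw [Fin.ne_iff_vne]; simp only [Fin.val_mk]; omega
        rw [Finset.sum_pair hne, Finset.sum_pair hne]
        simp only [Fin.val_mk]
        split_ifs with a b c d
        all_goals try (exfalso; omega)
        ring
    · -- sensing value
      show (pathNetwork K hK cap hcap A).sensOf _ = _
      rw [ISACNetwork.sensOf, sum_EA_split hK cap hcap A, ← hsum_sub,
          sum_UA hK cap hcap A (fun u => cap u - f)]
      apply Finset.sum_congr rfl
      intro e he
      have hfwd := (Finset.mem_filter.mp he).2
      show (if e.1.val + 1 = e.2.val then cap s(e.1, e.2) - f else 0)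
          + (if e.swap.1.val + 1 = e.swap.2.val then cap s(e.swap.1, e.swap.2) - f else 0)
          = cap s(e.1, e.2) - f
      rw [if_pos hfwd, if_neg (show ¬(e.swap.1.val + 1 = e.swap.2.val) from by
        simp only [Prod.fst_swap, Prod.snd_swap]; omega)]
      ring
    · -- flow value
      show (pathNetwork K hK cap hcap A).flowOf _ = _
      rw [ISACNetwork.flowOf, tx_filter_eq hK cap hcap A, Finset.sum_singleton]
      dsimp only
      split_ifs with h
      · rfl
      · exfalso; apply h; omega
  · -- upper bound
    rintro s ⟨fr, sr, hv, hsens, hflow⟩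
    simp only at hsens hflow
    have hv' := hv
    obtain ⟨hfr0, hsr0, ca, hca0, hsumc, hcale, hTx', hRx', hcons⟩ := hv'
    rw [← hsum_sub, ← hsens, ISACNetwork.sensOf, sum_EA_split hK cap hcap A,
        sum_UA hK cap hcap A (fun u => cap u - f)]
    apply Finset.sum_le_sum
    intro e he
    rw [Finset.mem_filter] at he
    obtain ⟨heA, hfwd⟩ := he
    have heE : e ∈ (pathNetwork K hK cap hcap A).E :=
      (Finset.mem_filter.mp heA).1
    have heE' : e.swap ∈ (pathNetwork K hK cap hcap A).E :=
      (pathNetwork K hK cap hcap A).symm _ _ heE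
    have h2 := e.2.isLt
    have hj : e.1.val + 1 < K := by omega
    have hcut := cut_lemma hK cap hcap A fr sr hv e.1.val hj
    rw [edge_eta e hfwd hj, edge_eta2 e hfwd hj] at hcut
    have hswap : e.swap = (e.2, e.1) := rfl
    have hc1 := hcale _ heE
    have hc2 := hcale _ heE'
    have hs2 := hfr0 _ heE'
    have hsum2 := hsumc e.1 e.2 heE
    have hc : (pathNetwork K hK cap hcap A).c s(e.1, e.2)
        = cap s(e.1, e.2) := rfl
    rw [hc] at hsum2
    rw [hswap] at hc2 hs2
    have hee : e = (e.1, e.2) := rfl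
    rw [← hee] at hsum2
    have hca3 := hca0 _ heE'
    rw [hswap] at hca3
    rw [hflow] at hcut
    rw [hswap]
    try dsimp only
    linarith
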